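/- If J − J* is injective, then every ℝ-bilinear alternating map ω : V × V → ℂ decomposes uniquely as ω = ω^{(2,0)} + ω^{(0,2)} + ω^{(1,1)}, where ω^{(2,0)} is of type (2,0), ω^{(0,2)} is of type (0,2), and ω^{(1,1)} is of type (1,1). -/

import Mathlib

open Complex

/-- An alternating ℝ-bilinear map ω : V × V → ℂ is of type (1,1) if it lies in the
ℂ-linear span of the maps (v,w) ↦ ξ(v)ζ(w) − ξ(w)ζ(v) with ξ J-linear and ζ J*-linear. -/
def IsType11 (V : Type*) [AddCommGroup V] [Module ℝ V] (J Jstar : V →ₗ[ℝ] V)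
    (ω : V →ₗ[ℝ] V →ₗ[ℝ] ℂ) : Prop :=
  ω ∈ Submodule.span ℂ {η : V →ₗ[ℝ] V →ₗ[ℝ] ℂ | ∃ ξ ζ : V →ₗ[ℝ] ℂ,
    (∀ v, ξ (J v) = I * ξ v) ∧ (∀ v, ζ (Jstar v) = I * ζ v) ∧
    ∀ v w, η v w = ξ v * ζ w - ξ w * ζ v}

section Aux

variable {V : Type*} [AddCommGroup V] [Module ℝ V]

/-- The projection operator on complex-valued 2-forms. -/
noncomputable def Phi (ω : V →ₗ[ℝ] V →ₗ[ℝ] ℂ) (A B : V →ₗ[ℝ] V) : V →ₗ[ℝ] V →ₗ[ℝ] ℂ :=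
  ω.compl₁₂ A A + I • ω.compl₁₂ A B + I • ω.compl₁₂ B A - ω.compl₁₂ B B

lemma Phi_apply (ω : V →ₗ[ℝ] V →ₗ[ℝ] ℂ) (A B : V →ₗ[ℝ] V) (v w : V) :
    Phi ω A B v w =
      ω (A v) (A w) + I * ω (A v) (B w) + I * ω (B v) (A w) - ω (B v) (B w) := by
  simp [Phi, smul_eq_mul]

lemma Phi_add (ω₁ ω₂ : V →ₗ[ℝ] V →ₗ[ℝ] ℂ) (A B : V →ₗ[ℝ] V) :
    Phi (ω₁ + ω₂) A B = Phi ω₁ A B + Phi ω₂ A B := by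
  ext v w
  simp only [Phi_apply, LinearMap.add_apply]
  ring

lemma Phi_smul (z : ℂ) (ω : V →ₗ[ℝ] V →ₗ[ℝ] ℂ) (A B : V →ₗ[ℝ] V) :
    Phi (z • ω) A B = z • Phi ω A B := by
  ext v w
  simp only [Phi_apply, LinearMap.smul_apply, smul_eq_mul]
  ring

lemma Phi_zero (A B : V →ₗ[ℝ] V) : Phi (0 : V →ₗ[ℝ] V →ₗ[ℝ] ℂ) A B = 0 := by
  ext v w
  simp [Phi_apply]

lemma alt_anti {ω : V →ₗ[ℝ] V →ₗ[ℝ] ℂ} (halt : ∀ v, ω v v = 0) :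
    ∀ x y, ω x y = -ω y x := by
  intro x y
  have h := halt (x + y)
  simp only [map_add, LinearMap.add_apply, halt x, halt y] at h
  linear_combination h

end Aux
section Aux2

variable {V : Type*} [AddCommGroup V] [Module ℝ V]

lemma phi_alt (ω : V →ₗ[ℝ] V →ₗ[ℝ] ℂ) (halt : ∀ v, ω v v = 0) (A B : V →ₗ[ℝ] V) (v : V) :
    Phi ω A B v v = 0 := by
  rw [Phi_apply, halt (A v), halt (B v), alt_anti halt (A v) (B v)]
  ring

lemma phi_type (ω : V →ₗ[ℝ] V →ₗ[ℝ] ℂ) (T L : V →ₗ[ℝ] V) (hTT : ∀ v, T (T v) = -v)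
    (v w : V) : Phi ω (L ∘ₗ T) L (T v) w = I * Phi ω (L ∘ₗ T) L v w := by
  simp only [Phi_apply, LinearMap.comp_apply, hTT, map_neg, LinearMap.neg_apply]
  ring_nf
  rw [Complex.I_sq]
  ring

/-- If `a` is of type `T` (i.e. `a(Tx,y) = i a(x,y)`) and `L(Tv) = v - T(Lv)`,
then `Phi a (L∘T) L = a`. -/
lemma proj_self (a : V →ₗ[ℝ] V →ₗ[ℝ] ℂ) (T L : V →ₗ[ℝ] V)
    (h1 : ∀ x y, a (T x) y = I * a x y) (h2 : ∀ x y, a x (T y) = I * a x y)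
    (hL : ∀ v, L (T v) = v - T (L v)) :
    Phi a (L ∘ₗ T) L = a := by
  ext v w
  simp only [Phi_apply, LinearMap.comp_apply, hL, map_sub, LinearMap.sub_apply, h1, h2]
  ring_nf
  rw [Complex.I_sq]
  ring

/-- Variant with `L(Tv) = -v - T(Lv)`. -/
lemma proj_self' (a : V →ₗ[ℝ] V →ₗ[ℝ] ℂ) (T L : V →ₗ[ℝ] V)
    (h1 : ∀ x y, a (T x) y = I * a x y) (h2 : ∀ x y, a x (T y) = I * a x y)
    (hL : ∀ v, L (T v) = -v - T (L v)) :
    Phi a (L ∘ₗ T) L = a := by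
  ext v w
  simp only [Phi_apply, LinearMap.comp_apply, hL, map_sub, map_neg, LinearMap.sub_apply,
    LinearMap.neg_apply, h1, h2]
  ring_nf
  rw [Complex.I_sq]
  ring

/-- If `a` is of type `T` and `L(Sv) = -T(Lv)`, then `Phi a (L∘S) L = 0`. -/
lemma proj_kill (a : V →ₗ[ℝ] V →ₗ[ℝ] ℂ) (S T L : V →ₗ[ℝ] V)
    (h1 : ∀ x y, a (T x) y = I * a x y) (h2 : ∀ x y, a x (T y) = I * a x y)
    (hL : ∀ v, L (S v) = -(T (L v))) :
    Phi a (L ∘ₗ S) L = 0 := by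
  ext v w
  simp only [Phi_apply, LinearMap.comp_apply, hL, map_neg, LinearMap.neg_apply, h1, h2,
    LinearMap.zero_apply]
  ring_nf
  rw [Complex.I_sq]
  ring

/-- A wedge `ξ ∧ ζ` with `ξ` J-linear and `ζ` J*-linear is killed by `Phi · (L∘J) L`. -/
lemma wedge_killJ (η : V →ₗ[ℝ] V →ₗ[ℝ] ℂ) (ξ ζ : V →ₗ[ℝ] ℂ) (J L : V →ₗ[ℝ] V)
    (hη : ∀ v w, η v w = ξ v * ζ w - ξ w * ζ v)
    (hx : ∀ v, ξ (L (J v)) = ξ v - I * ξ (L v))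
    (hz : ∀ v, ζ (L (J v)) = -(I * ζ (L v))) :
    Phi η (L ∘ₗ J) L = 0 := by
  ext v w
  simp only [Phi_apply, LinearMap.comp_apply, hη, hx, hz, LinearMap.zero_apply]
  ring_nf
  rw [Complex.I_sq]
  ring

lemma wedge_killJstar (η : V →ₗ[ℝ] V →ₗ[ℝ] ℂ) (ξ ζ : V →ₗ[ℝ] ℂ) (Jstar L : V →ₗ[ℝ] V)
    (hη : ∀ v w, η v w = ξ v * ζ w - ξ w * ζ v)
    (hx : ∀ v, ξ (L (Jstar v)) = -(I * ξ (L v)))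
    (hz : ∀ v, ζ (L (Jstar v)) = -ζ v - I * ζ (L v)) :
    Phi η (L ∘ₗ Jstar) L = 0 := by
  ext v w
  simp only [Phi_apply, LinearMap.comp_apply, hη, hx, hz, LinearMap.zero_apply]
  ring_nf
  rw [Complex.I_sq]
  ring

end Aux2
section Aux3

variable {V : Type*} [AddCommGroup V] [Module ℝ V]

noncomputable def reC : ℝ →ₗ[ℝ] ℂ := Complex.ofRealAm.toLinearMap

@[simp] lemma reC_apply (r : ℝ) : reC r = (r : ℂ) := rfl

variable {ι : Type*}

/-- The J-linear functional `v ↦ (coord (L(Jv)) : ℂ) + i (coord (Lv) : ℂ)`. -/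
noncomputable def xiF (L J : V →ₗ[ℝ] V) (b : Module.Basis ι ℝ V) (t : ι) : V →ₗ[ℝ] ℂ :=
  reC ∘ₗ (b.coord t ∘ₗ (L ∘ₗ J)) + I • (reC ∘ₗ (b.coord t ∘ₗ L))

lemma xiF_apply (L J : V →ₗ[ℝ] V) (b : Module.Basis ι ℝ V) (t : ι) (v : V) :
    xiF L J b t v = ((b.repr (L (J v)) t : ℝ) : ℂ) + I * ((b.repr (L v) t : ℝ) : ℂ) := by
  simp [xiF, Module.Basis.coord_apply, smul_eq_mul]

/-- The J*-linear functional `v ↦ -(coord (L(J*v)) : ℂ) - i (coord (Lv) : ℂ)`. -/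
noncomputable def zetaF (L Jstar : V →ₗ[ℝ] V) (b : Module.Basis ι ℝ V) (s : ι) : V →ₗ[ℝ] ℂ :=
  -(reC ∘ₗ (b.coord s ∘ₗ (L ∘ₗ Jstar))) - I • (reC ∘ₗ (b.coord s ∘ₗ L))

lemma zetaF_apply (L Jstar : V →ₗ[ℝ] V) (b : Module.Basis ι ℝ V) (s : ι) (v : V) :
    zetaF L Jstar b s v
      = -((b.repr (L (Jstar v)) s : ℝ) : ℂ) - I * ((b.repr (L v) s : ℝ) : ℂ) := by
  simp [zetaF, Module.Basis.coord_apply, smul_eq_mul]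

lemma xiF_Jlinear (L J : V →ₗ[ℝ] V) (b : Module.Basis ι ℝ V) (t : ι)
    (hJJ : ∀ v, J (J v) = -v) (v : V) :
    xiF L J b t (J v) = I * xiF L J b t v := by
  simp only [xiF_apply, hJJ, map_neg, Finsupp.coe_neg, Pi.neg_apply, Complex.ofReal_neg]
  ring_nf
  rw [Complex.I_sq]
  ring

lemma zetaF_Jstarlinear (L Jstar : V →ₗ[ℝ] V) (b : Module.Basis ι ℝ V) (s : ι)
    (hJJ : ∀ v, Jstar (Jstar v) = -v) (v : V) :
    zetaF L Jstar b s (Jstar v) = I * zetaF L Jstar b s v := by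
  simp only [zetaF_apply, hJJ, map_neg, Finsupp.coe_neg, Pi.neg_apply, Complex.ofReal_neg]
  ring_nf
  rw [Complex.I_sq]
  ring

/-- `ξ ∧ ζ` as a bilinear map. -/
noncomputable def wedgeF (ξ ζ : V →ₗ[ℝ] ℂ) : V →ₗ[ℝ] V →ₗ[ℝ] ℂ :=
  ξ.smulRight ζ - ζ.smulRight ξ

lemma wedgeF_apply (ξ ζ : V →ₗ[ℝ] ℂ) (v w : V) :
    wedgeF ξ ζ v w = ξ v * ζ w - ξ w * ζ v := by
  simp [wedgeF, smul_eq_mul]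
  ring

lemma sumA [Fintype ι] (b : Module.Basis ι ℝ V) (g : V →ₗ[ℝ] ℂ) (y : V) :
    ∑ t, ((b.repr y t : ℝ) : ℂ) * g (b t) = g y := by
  calc ∑ t, ((b.repr y t : ℝ) : ℂ) * g (b t)
      = ∑ t, g ((b.repr y t) • b t) := by
        refine Finset.sum_congr rfl fun t _ => ?_
        rw [map_smul, Complex.real_smul]
    _ = g (∑ t, (b.repr y t) • b t) := (map_sum g _ _).symm
    _ = g y := by rw [b.sum_repr]

lemma sumXi [Fintype ι] (L J : V →ₗ[ℝ] V) (b : Module.Basis ι ℝ V) (g : V →ₗ[ℝ] ℂ) (v : V) :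
    ∑ t, xiF L J b t v * g (b t) = g (L (J v)) + I * g (L v) := by
  calc ∑ t, xiF L J b t v * g (b t)
      = ∑ t, (((b.repr (L (J v)) t : ℝ) : ℂ) * g (b t)
          + I * (((b.repr (L v) t : ℝ) : ℂ) * g (b t))) := by
        refine Finset.sum_congr rfl fun t _ => ?_
        rw [xiF_apply]; ring
    _ = (∑ t, ((b.repr (L (J v)) t : ℝ) : ℂ) * g (b t))
          + I * ∑ t, ((b.repr (L v) t : ℝ) : ℂ) * g (b t) := by
        rw [Finset.sum_add_distrib, Finset.mul_sum]
    _ = g (L (J v)) + I * g (L v) := by rw [sumA, sumA]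

lemma sumZeta [Fintype ι] (L Jstar : V →ₗ[ℝ] V) (b : Module.Basis ι ℝ V) (g : V →ₗ[ℝ] ℂ) (v : V) :
    ∑ s, zetaF L Jstar b s v * g (b s) = -g (L (Jstar v)) - I * g (L v) := by
  calc ∑ s, zetaF L Jstar b s v * g (b s)
      = ∑ s, (-(((b.repr (L (Jstar v)) s : ℝ) : ℂ) * g (b s))
          + (-I) * (((b.repr (L v) s : ℝ) : ℂ) * g (b s))) := by
        refine Finset.sum_congr rfl fun s _ => ?_
        rw [zetaF_apply]; ring
    _ = -(∑ s, ((b.repr (L (Jstar v)) s : ℝ) : ℂ) * g (b s))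
          + (-I) * ∑ s, ((b.repr (L v) s : ℝ) : ℂ) * g (b s) := by
        rw [Finset.sum_add_distrib, Finset.mul_sum, Finset.sum_neg_distrib]
    _ = -g (L (Jstar v)) - I * g (L v) := by rw [sumA, sumA]; ring

end Aux3
section Aux4

variable {V : Type*} [AddCommGroup V] [Module ℝ V] {ι : Type*}

lemma double_sum_eval [Fintype ι] (ω : V →ₗ[ℝ] V →ₗ[ℝ] ℂ) (L J Jstar : V →ₗ[ℝ] V)
    (b : Module.Basis ι ℝ V) (v w : V) :
    (∑ s, ∑ t, (-(ω (b s) (b t))) • wedgeF (xiF L J b t) (zetaF L Jstar b s)) v w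
      = (ω (L (Jstar w)) (L (J v)) + I * ω (L (Jstar w)) (L v)
          + I * ω (L w) (L (J v)) + I * (I * ω (L w) (L v)))
        - (ω (L (Jstar v)) (L (J w)) + I * ω (L (Jstar v)) (L w)
          + I * ω (L v) (L (J w)) + I * (I * ω (L v) (L w))) := by
  have step1 : ∀ s, ∑ t, (-(ω (b s) (b t))) * (wedgeF (xiF L J b t) (zetaF L Jstar b s) v w)
      = -(zetaF L Jstar b s w * (ω (b s) (L (J v)) + I * ω (b s) (L v)))
        + zetaF L Jstar b s v * (ω (b s) (L (J w)) + I * ω (b s) (L w)) := by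
    intro s
    calc ∑ t, (-(ω (b s) (b t))) * (wedgeF (xiF L J b t) (zetaF L Jstar b s) v w)
        = ∑ t, (-(zetaF L Jstar b s w) * (xiF L J b t v * ω (b s) (b t))
              + zetaF L Jstar b s v * (xiF L J b t w * ω (b s) (b t))) := by
          refine Finset.sum_congr rfl fun t _ => ?_
          rw [wedgeF_apply]; ring
      _ = -(zetaF L Jstar b s w) * (∑ t, xiF L J b t v * ω (b s) (b t))
            + zetaF L Jstar b s v * (∑ t, xiF L J b t w * ω (b s) (b t)) := by
          rw [Finset.sum_add_distrib, Finset.mul_sum, Finset.mul_sum]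
      _ = _ := by rw [sumXi, sumXi]; ring
  have e2 := sumZeta L Jstar b (ω.flip (L (J v)) + I • ω.flip (L v)) w
  have e3 := sumZeta L Jstar b (ω.flip (L (J w)) + I • ω.flip (L w)) v
  simp only [LinearMap.add_apply, LinearMap.smul_apply, LinearMap.flip_apply,
    smul_eq_mul] at e2 e3
  calc (∑ s, ∑ t, (-(ω (b s) (b t))) • wedgeF (xiF L J b t) (zetaF L Jstar b s)) v w
      = ∑ s, ∑ t, (-(ω (b s) (b t))) * (wedgeF (xiF L J b t) (zetaF L Jstar b s) v w) := by
        simp only [LinearMap.coe_sum, Finset.sum_apply, LinearMap.smul_apply, smul_eq_mul]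
    _ = ∑ s, (-(zetaF L Jstar b s w * (ω (b s) (L (J v)) + I * ω (b s) (L v)))
          + zetaF L Jstar b s v * (ω (b s) (L (J w)) + I * ω (b s) (L w))) :=
        Finset.sum_congr rfl fun s _ => step1 s
    _ = -(∑ s, zetaF L Jstar b s w * (ω (b s) (L (J v)) + I * ω (b s) (L v)))
          + ∑ s, zetaF L Jstar b s v * (ω (b s) (L (J w)) + I * ω (b s) (L w)) := by
        rw [Finset.sum_add_distrib, Finset.sum_neg_distrib]
    _ = _ := by rw [e2, e3]; ring

lemma cross_repr [Fintype ι] (ω : V →ₗ[ℝ] V →ₗ[ℝ] ℂ) (halt : ∀ v, ω v v = 0)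
    (L J Jstar : V →ₗ[ℝ] V) (b : Module.Basis ι ℝ V)
    (hvsum : ∀ v, L (J v) - L (Jstar v) = v) :
    ω - Phi ω (L ∘ₗ J) L - Phi ω (L ∘ₗ Jstar) L
      = ∑ s, ∑ t, (-(ω (b s) (b t))) • wedgeF (xiF L J b t) (zetaF L Jstar b s) := by
  ext v w
  rw [double_sum_eval ω L J Jstar b v w]
  simp only [LinearMap.sub_apply, Phi_apply, LinearMap.comp_apply]
  have hvw : ω v w = ω (L (J v)) (L (J w)) - ω (L (J v)) (L (Jstar w))
      - ω (L (Jstar v)) (L (J w)) + ω (L (Jstar v)) (L (Jstar w)) := by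
    conv_lhs => rw [← hvsum v, ← hvsum w]
    simp only [map_sub, LinearMap.sub_apply]
    ring
  rw [hvw, alt_anti halt (L (Jstar w)) (L (J v)), alt_anti halt (L (Jstar w)) (L v),
    alt_anti halt (L w) (L (J v)), alt_anti halt (L w) (L v)]
  ring_nf
  rw [Complex.I_sq]
  ring

end Aux4

theorem two_form_type_decomposition
    (V : Type*) [AddCommGroup V] [Module ℝ V] [FiniteDimensional ℝ V]
    (J Jstar : V →ₗ[ℝ] V)
    (hJ : J ∘ₗ J = -LinearMap.id) (hJstar : Jstar ∘ₗ Jstar = -LinearMap.id)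
    (hinj : Function.Injective (J - Jstar)) :
    ∀ ω : V →ₗ[ℝ] V →ₗ[ℝ] ℂ, (∀ v, ω v v = 0) →
      ∃! t : (V →ₗ[ℝ] V →ₗ[ℝ] ℂ) × (V →ₗ[ℝ] V →ₗ[ℝ] ℂ) × (V →ₗ[ℝ] V →ₗ[ℝ] ℂ),
        ω = t.1 + t.2.1 + t.2.2 ∧
        (∀ v, t.1 v v = 0) ∧ (∀ v w, t.1 (J v) w = I * t.1 v w) ∧
        (∀ v, t.2.1 v v = 0) ∧ (∀ v w, t.2.1 (Jstar v) w = I * t.2.1 v w) ∧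
        IsType11 V J Jstar t.2.2 := by
  intro ω halt
  have hbij : Function.Bijective (J - Jstar) :=
    ⟨hinj, (LinearMap.injective_iff_surjective).mp hinj⟩
  obtain ⟨L, hLK, hKL⟩ : ∃ L : V →ₗ[ℝ] V,
      (∀ v, L ((J - Jstar) v) = v) ∧ (∀ v, (J - Jstar) (L v) = v) := by
    refine ⟨(LinearEquiv.ofBijective (J - Jstar) hbij).symm.toLinearMap,
      fun v => ?_, fun v => ?_⟩
    · simpa using (LinearEquiv.ofBijective (J - Jstar) hbij).symm_apply_apply v
    · simpa using (LinearEquiv.ofBijective (J - Jstar) hbij).apply_symm_apply v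
  have hJJ : ∀ v, J (J v) = -v := fun v => by
    have := LinearMap.ext_iff.mp hJ v; simp only [LinearMap.comp_apply, LinearMap.neg_apply, LinearMap.id_coe, id_eq] at this; exact this
  have hJsJs : ∀ v, Jstar (Jstar v) = -v := fun v => by
    have := LinearMap.ext_iff.mp hJstar v; simpa using this
  -- the key identities for L = (J - J*)⁻¹
  have hLJs1 : ∀ v, L (Jstar v) = -(J (L v)) := by
    intro v
    have h1 : Jstar v = (J - Jstar) (-(J (L v))) := by
      calc Jstar v = Jstar ((J - Jstar) (L v)) := by rw [hKL]
        _ = (J - Jstar) (-(J (L v))) := by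
            simp only [LinearMap.sub_apply, map_sub, map_neg, hJJ, hJsJs]
            abel
    rw [h1, hLK]
  have hLJ2 : ∀ v, L (J v) = -(Jstar (L v)) := by
    intro v
    have h1 : J v = (J - Jstar) (-(Jstar (L v))) := by
      calc J v = J ((J - Jstar) (L v)) := by rw [hKL]
        _ = (J - Jstar) (-(Jstar (L v))) := by
            simp only [LinearMap.sub_apply, map_sub, map_neg, hJJ, hJsJs]
            abel
    rw [h1, hLK]
  have hvsum : ∀ v, L (J v) - L (Jstar v) = v := by
    intro v
    rw [← map_sub, show J v - Jstar v = (J - Jstar) v from (LinearMap.sub_apply J Jstar v).symm,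
      hLK]
  have hLJ1 : ∀ v, L (J v) = v - J (L v) := by
    intro v
    calc L (J v) = v + L (Jstar v) := sub_eq_iff_eq_add.mp (hvsum v)
      _ = v + -(J (L v)) := by rw [hLJs1]
      _ = v - J (L v) := by abel
  have hLJs2 : ∀ v, L (Jstar v) = -v - Jstar (L v) := by
    intro v
    have h := sub_eq_iff_eq_add.mp (hvsum v)
    calc L (Jstar v) = (v + L (Jstar v)) - v := by abel
      _ = L (J v) - v := by rw [← h]
      _ = -(Jstar (L v)) - v := by rw [hLJ2]
      _ = -v - Jstar (L v) := by abel
  -- the basis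
  set b : Module.Basis (Fin (Module.finrank ℝ V)) ℝ V := Module.finBasis ℝ V with hb
  -- membership of the (1,1) part
  have hmem : IsType11 V J Jstar (ω - Phi ω (L ∘ₗ J) L - Phi ω (L ∘ₗ Jstar) L) := by
    rw [IsType11, cross_repr ω halt L J Jstar b hvsum]
    refine Submodule.sum_mem _ fun s _ => Submodule.sum_mem _ fun t _ =>
      Submodule.smul_mem _ _ (Submodule.subset_span ?_)
    exact ⟨xiF L J b t, zetaF L Jstar b s,
      fun v => xiF_Jlinear L J b t hJJ v,
      fun v => zetaF_Jstarlinear L Jstar b s hJsJs v,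
      fun v w => by rw [wedgeF_apply]⟩
  refine ⟨⟨Phi ω (L ∘ₗ J) L, Phi ω (L ∘ₗ Jstar) L,
      ω - Phi ω (L ∘ₗ J) L - Phi ω (L ∘ₗ Jstar) L⟩,
    ⟨by ext v w; simp only [LinearMap.add_apply, LinearMap.sub_apply]; ring, fun v => phi_alt ω halt _ _ v, fun v w => phi_type ω J L hJJ v w,
      fun v => phi_alt ω halt _ _ v, fun v w => phi_type ω Jstar L hJsJs v w, hmem⟩, ?_⟩
  -- uniqueness
  rintro ⟨a, b2, c⟩ ⟨hsum2, ha0, haJ, hb0, hbJ, hc⟩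
  have haJ' : ∀ x y, a x (J y) = I * a x y := fun x y => by
    rw [alt_anti ha0 x (J y), haJ, alt_anti ha0 y x]; ring
  have hbJ' : ∀ x y, b2 x (Jstar y) = I * b2 x y := fun x y => by
    rw [alt_anti hb0 x (Jstar y), hbJ, alt_anti hb0 y x]; ring
  have hPa1 : Phi a (L ∘ₗ J) L = a := proj_self a J L haJ haJ' hLJ1
  have hPa2 : Phi a (L ∘ₗ Jstar) L = 0 := proj_kill a Jstar J L haJ haJ' hLJs1
  have hPb1 : Phi b2 (L ∘ₗ Jstar) L = b2 := proj_self' b2 Jstar L hbJ hbJ' hLJs2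
  have hPb2 : Phi b2 (L ∘ₗ J) L = 0 := proj_kill b2 J Jstar L hbJ hbJ' hLJ2
  have hPc : Phi c (L ∘ₗ J) L = 0 ∧ Phi c (L ∘ₗ Jstar) L = 0 := by
    refine Submodule.span_induction
      (p := fun x _ => Phi x (L ∘ₗ J) L = 0 ∧ Phi x (L ∘ₗ Jstar) L = 0) ?_ ?_ ?_ ?_ hc
    · rintro η ⟨ξ, ζ, hξ, hζ, hη⟩
      constructor
      · refine wedge_killJ η ξ ζ J L hη (fun v => ?_) (fun v => ?_)
        · rw [hLJ1 v, map_sub, hξ]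
        · rw [hLJ2 v, map_neg, hζ]
      · refine wedge_killJstar η ξ ζ Jstar L hη (fun v => ?_) (fun v => ?_)
        · rw [hLJs1 v, map_neg, hξ]
        · rw [hLJs2 v, map_sub, map_neg, hζ]
    · exact ⟨Phi_zero _ _, Phi_zero _ _⟩
    · intro x y _ _ hx hy
      exact ⟨by rw [Phi_add, hx.1, hy.1, add_zero], by rw [Phi_add, hx.2, hy.2, add_zero]⟩
    · intro z x _ hx
      exact ⟨by rw [Phi_smul, hx.1, smul_zero], by rw [Phi_smul, hx.2, smul_zero]⟩
  have hA : a = Phi ω (L ∘ₗ J) L := by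
    rw [hsum2, Phi_add, Phi_add, hPa1, hPb2, hPc.1, add_zero, add_zero]
  have hB : b2 = Phi ω (L ∘ₗ Jstar) L := by
    rw [hsum2, Phi_add, Phi_add, hPa2, hPb1, hPc.2, zero_add, add_zero]
  have hC : c = ω - Phi ω (L ∘ₗ J) L - Phi ω (L ∘ₗ Jstar) L := by
    have h : c = ω - a - b2 := by rw [hsum2]; abel
    rw [hA, hB] at h
    exact h
  rw [Prod.mk.injEq, Prod.mk.injEq]
  exact ⟨hA, hB, hC⟩
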